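/- Let H : [2, ∞) × (0, T) → (0, ∞) satisfy H(pχ, σ) ≤ (4^{1+1/n} A)^{1/(pχ)} (a p + χ/(χ−1) · 1/(σ − τ))^{1/p} H(p, τ) for all p ≥ 2 and 0 < τ < σ < T, where χ = 1 + 2/n, A > 0, a ≥ 0, n ≥ 3. Fix p₀ ≥ 2 and 0 < t₀ < t₁ < T, and set p_k = p₀ χ^k, τ_k = t₀ + (1 − χ^{−k})(t₁ − t₀). If H(p, τ) is nonincreasing in τ for fixed p and H(p_k, τ_k) converges as k → ∞ to H_∞ := lim sup, then H_∞ ≤ C₀ (a p₀ + (n+2)/(2(t₁ − t₀)))^{(n+2)/(2p₀)} H(p₀, t₀), where C₀ depends only on n, A and p₀. -/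

import Mathlib

open Filter

set_option maxHeartbeats 1000000 in
/-- Moser iteration scheme: if `H` satisfies the one-step improvement
`H(pχ, σ) ≤ (4^{1+1/n} A)^{1/(pχ)} (a p + (χ/(χ−1)) (σ−τ)⁻¹)^{1/p} H(p, τ)` with
`χ = 1 + 2/n`, is nonincreasing in its second argument, and `H(p_k, τ_k)` converges along
`p_k = p₀ χ^k`, `τ_k = t₀ + (1 − χ^{−k})(t₁ − t₀)` to `H_∞`, then
`H_∞ ≤ C₀ (a p₀ + (n+2)/(2(t₁−t₀)))^{(n+2)/(2p₀)} H(p₀, t₀)` where `C₀` depends only on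
`n`, `A`, `p₀`. -/
theorem moser_iteration (n : ℕ) (hn : 3 ≤ n) (A p₀ : ℝ) (hA : 0 < A) (hp₀ : 2 ≤ p₀) :
    ∃ C₀ : ℝ, 0 < C₀ ∧
      ∀ (T a t₀ t₁ Hinf : ℝ) (H : ℝ → ℝ → ℝ),
        0 ≤ a → 0 < t₀ → t₀ < t₁ → t₁ < T →
        (∀ p τ, 0 < H p τ) →
        (∀ p τ σ : ℝ, 2 ≤ p → 0 < τ → τ < σ → σ < T →
          H (p * (1 + 2 / n)) σ
            ≤ ((4 : ℝ) ^ (1 + 1 / (n : ℝ)) * A) ^ (1 / (p * (1 + 2 / n))) *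
                (a * p + (1 + 2 / (n : ℝ)) / ((1 + 2 / (n : ℝ)) - 1) * (1 / (σ - τ))) ^ (1 / p) *
                H p τ) →
        (∀ p τ σ : ℝ, τ ≤ σ → H p σ ≤ H p τ) →
        Tendsto (fun k : ℕ =>
            H (p₀ * (1 + 2 / (n : ℝ)) ^ k)
              (t₀ + (1 - ((1 + 2 / (n : ℝ)) ^ k)⁻¹) * (t₁ - t₀))) atTop (nhds Hinf) →
        Hinf ≤ C₀ * (a * p₀ + ((n : ℝ) + 2) / (2 * (t₁ - t₀))) ^ (((n : ℝ) + 2) / (2 * p₀)) *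
            H p₀ t₀ := by
  have hn3 : (3:ℝ) ≤ (n:ℝ) := by exact_mod_cast hn
  have hnpos : (0:ℝ) < (n:ℝ) := by linarith
  have hn0 : (n:ℝ) ≠ 0 := ne_of_gt hnpos
  have hp₀pos : (0:ℝ) < p₀ := by linarith
  have h2n : (0:ℝ) < 2 / (n:ℝ) := by positivity
  set χ : ℝ := 1 + 2/(n:ℝ) with hχ
  have hχ1 : (1:ℝ) < χ := by rw [hχ]; linarith
  have hχ0 : (0:ℝ) < χ := by linarith
  have hrin0 : (0:ℝ) < χ⁻¹ := by positivity
  have hrin1 : χ⁻¹ < 1 := inv_lt_one_of_one_lt₀ hχ1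
  set κ : ℝ := ((n:ℝ)+2)/2 with hκ
  have hκ1 : (1:ℝ) ≤ κ := by rw [hκ]; linarith
  have hκ0 : (0:ℝ) < κ := by linarith
  have hκχ : χ/(χ-1) = κ := by rw [hχ, hκ]; field_simp; ring
  set α : ℝ := ((n:ℝ)+2)/(2*p₀) with hα
  have hα0 : 0 < α := by rw [hα]; positivity
  set B : ℝ := (4:ℝ)^(1+1/(n:ℝ)) * A with hB
  have hB0 : 0 < B := by
    rw [hB]; exact mul_pos (Real.rpow_pos_of_pos (by norm_num) _) hA
  set v : ℕ → ℝ := fun k => p₀⁻¹ * (χ⁻¹)^k with hv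
  have hv0 : ∀ k, 0 < v k := fun k => by rw [hv]; positivity
  have hSsum : HasSum v α := by
    have h := (hasSum_geometric_of_lt_one hrin0.le hrin1).mul_left p₀⁻¹
    have heq : p₀⁻¹ * (1-χ⁻¹)⁻¹ = α := by
      have h1 : 1 - χ⁻¹ = (χ-1)/χ := by
        field_simp
      rw [h1, inv_div, hκχ, hκ, hα, inv_mul_eq_div, div_div]
    rwa [heq] at h
  have hS : Tendsto (fun K => ∑ k ∈ Finset.range K, v k) atTop (nhds α) :=
    hSsum.tendsto_sum_nat
  have hkvsum : Summable (fun k:ℕ => (k:ℝ) * v k) := by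
    have h := summable_pow_mul_geometric_of_norm_lt_one (R := ℝ) 1
      (r := χ⁻¹) (by rw [Real.norm_eq_abs, abs_of_pos hrin0]; exact hrin1)
    refine (h.mul_left p₀⁻¹).congr fun k => ?_
    rw [hv]; ring
  set W : ℝ := ∑' k:ℕ, (k:ℝ) * v k with hW
  have hT : Tendsto (fun K => ∑ k ∈ Finset.range K, (k:ℝ) * v k) atTop (nhds W) :=
    hkvsum.hasSum.tendsto_sum_nat
  clear_value χ κ α B v W
  refine ⟨(max B 1) ^ α * χ ^ W * κ ^ α, ?_, ?_⟩
  · have h1 : (0:ℝ) < max B 1 := lt_of_lt_of_le one_pos (le_max_right _ _)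
    exact mul_pos (mul_pos (Real.rpow_pos_of_pos h1 _) (Real.rpow_pos_of_pos hχ0 _))
      (Real.rpow_pos_of_pos hκ0 _)
  intro T a t₀ t₁ Hinf H ha ht₀ ht01 ht1T hHpos hstep _hmono htend
  rw [hκχ] at hstep
  have hΔ : (0:ℝ) < t₁ - t₀ := by linarith
  set M : ℝ := a * p₀ + ((n:ℝ)+2)/(2*(t₁-t₀)) with hM
  have hM0 : 0 < M := by
    rw [hM]
    exact add_pos_of_nonneg_of_pos (mul_nonneg ha hp₀pos.le)
      (div_pos (by linarith) (by linarith))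
  set F : ℝ := a * p₀ + κ^2/(t₁-t₀) with hF
  have hF0 : 0 < F := by
    rw [hF]
    exact add_pos_of_nonneg_of_pos (mul_nonneg ha hp₀pos.le)
      (div_pos (pow_pos hκ0 2) hΔ)
  clear_value M F
  have hFκM : F ≤ κ * M := by
    rw [hF, hM]
    have h2 : κ * (((n:ℝ)+2)/(2*(t₁-t₀))) = κ^2/(t₁-t₀) := by
      rw [hκ]; field_simp
    rw [mul_add, h2]
    exact add_le_add_left (le_mul_of_one_le_left (mul_nonneg ha hp₀pos.le) hκ1) _
  have hχk0 : ∀ k : ℕ, (0:ℝ) < χ ^ k := fun k => pow_pos hχ0 k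
  have hχk1 : ∀ k : ℕ, (1:ℝ) ≤ χ ^ k := fun k => one_le_pow₀ hχ1.le
  have hinv1 : ∀ k : ℕ, (χ ^ k)⁻¹ ≤ 1 := fun k => inv_le_one_of_one_le₀ (hχk1 k)
  have hτ0 : ∀ k : ℕ, 0 < t₀ + (1 - (χ ^ k)⁻¹) * (t₁ - t₀) := by
    intro k
    have h := hinv1 k
    exact add_pos_of_pos_of_nonneg ht₀ (mul_nonneg (by linarith) hΔ.le)
  have hτlt : ∀ k : ℕ, t₀ + (1 - (χ ^ k)⁻¹) * (t₁ - t₀) < t₁ := by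
    intro k
    have h := mul_lt_mul_of_pos_right
      (show 1 - (χ ^ k)⁻¹ < 1 by linarith [inv_pos.2 (hχk0 k)]) hΔ
    rw [one_mul] at h
    linarith
  have hτmono : ∀ k : ℕ, t₀ + (1 - (χ ^ k)⁻¹) * (t₁ - t₀)
      < t₀ + (1 - (χ ^ (k+1))⁻¹) * (t₁ - t₀) := by
    intro k
    have h1 : χ ^ k < χ ^ (k+1) := by
      rw [pow_succ]
      exact lt_mul_of_one_lt_right (hχk0 k) hχ1
    have h2 : (χ ^ (k+1))⁻¹ < (χ ^ k)⁻¹ := inv_strictAnti₀ (hχk0 k) h1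
    have h3 := mul_lt_mul_of_pos_right (sub_lt_sub_left h2 1) hΔ
    linarith
  -- inverse of the gap
  have hginv : ∀ k : ℕ,
      1 / (t₀ + (1 - (χ ^ (k+1))⁻¹) * (t₁ - t₀) - (t₀ + (1 - (χ ^ k)⁻¹) * (t₁ - t₀)))
        = χ ^ k * χ / ((χ - 1) * (t₁ - t₀)) := by
    intro k
    have hgap : t₀ + (1 - (χ ^ (k+1))⁻¹) * (t₁ - t₀) - (t₀ + (1 - (χ ^ k)⁻¹) * (t₁ - t₀))
        = (χ - 1) * (t₁ - t₀) / (χ ^ k * χ) := by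
      rw [pow_succ]
      field_simp
      ring
    rw [hgap, one_div_div]
  have hfac : ∀ k : ℕ,
      a * (p₀ * χ ^ k) + κ * (1 / (t₀ + (1 - (χ ^ (k+1))⁻¹) * (t₁ - t₀)
        - (t₀ + (1 - (χ ^ k)⁻¹) * (t₁ - t₀)))) = χ ^ k * F := by
    intro k
    rw [hginv k, hF, hκ, hχ]
    have hX : ((1:ℝ) + 2/(n:ℝ)) ^ k ≠ 0 := by positivity
    have hY : (1:ℝ) + 2/(n:ℝ) - 1 ≠ 0 := by
      intro h; exact absurd (by linarith : (2:ℝ)/(n:ℝ) = 0) h2n.ne'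
    field_simp
    ring
  -- main iteration claim
  have claim : ∀ K : ℕ,
      H (p₀ * χ ^ K) (t₀ + (1 - (χ ^ K)⁻¹) * (t₁ - t₀)) ≤
        B ^ (χ⁻¹ * ∑ k ∈ Finset.range K, v k) *
          χ ^ (∑ k ∈ Finset.range K, (k:ℝ) * v k) *
          F ^ (∑ k ∈ Finset.range K, v k) * H p₀ t₀ := by
    intro K
    induction K with
    | zero =>
        simp only [pow_zero, Finset.range_zero, Finset.sum_empty, mul_zero, Real.rpow_zero,
          inv_one, sub_self, zero_mul, add_zero, mul_one, one_mul]
        exact le_refl _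
    | succ K ih =>
        have hp : 2 ≤ p₀ * χ ^ K :=
          le_trans hp₀ (le_mul_of_one_le_right hp₀pos.le (hχk1 K))
        have step := hstep (p₀ * χ ^ K) (t₀ + (1 - (χ ^ K)⁻¹) * (t₁ - t₀))
          (t₀ + (1 - (χ ^ (K+1))⁻¹) * (t₁ - t₀)) hp (hτ0 K) (hτmono K)
          (lt_trans (hτlt (K+1)) ht1T)
        rw [hfac K] at step
        have e0 : p₀ * χ ^ K * χ = p₀ * χ ^ (K+1) := by rw [pow_succ, mul_assoc]
        have e : ∀ k : ℕ, 1 / (p₀ * χ ^ k) = v k := by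
          intro k
          simp only [hv, one_div, mul_inv, ← inv_pow]
        rw [e0, e (K+1), e K] at step
        have hnn : 0 ≤ B ^ v (K+1) * (χ ^ K * F) ^ v K :=
          mul_nonneg (Real.rpow_nonneg hB0.le _)
            (Real.rpow_nonneg (mul_nonneg (hχk0 K).le hF0.le) _)
        calc H (p₀ * χ ^ (K+1)) (t₀ + (1 - (χ ^ (K+1))⁻¹) * (t₁ - t₀))
            ≤ B ^ v (K+1) * (χ ^ K * F) ^ v K * H (p₀ * χ ^ K)
              (t₀ + (1 - (χ ^ K)⁻¹) * (t₁ - t₀)) := step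
          _ ≤ B ^ v (K+1) * (χ ^ K * F) ^ v K *
              (B ^ (χ⁻¹ * ∑ k ∈ Finset.range K, v k) *
                χ ^ (∑ k ∈ Finset.range K, (k:ℝ) * v k) *
                F ^ (∑ k ∈ Finset.range K, v k) * H p₀ t₀) := by
              exact mul_le_mul_of_nonneg_left ih hnn
          _ = B ^ (χ⁻¹ * ∑ k ∈ Finset.range (K+1), v k) *
                χ ^ (∑ k ∈ Finset.range (K+1), (k:ℝ) * v k) *
                F ^ (∑ k ∈ Finset.range (K+1), v k) * H p₀ t₀ := by
              rw [Finset.sum_range_succ, Finset.sum_range_succ,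
                mul_add, Real.rpow_add hB0, Real.rpow_add hχ0, Real.rpow_add hF0,
                Real.mul_rpow (hχk0 K).le hF0.le,
                ← Real.rpow_natCast χ K, ← Real.rpow_mul hχ0.le]
              have ev : χ⁻¹ * v K = v (K+1) := by
                simp only [hv, pow_succ]; ring
              rw [ev]
              all_goals ring
  -- take the limit
  have hRHS : Tendsto (fun K : ℕ =>
      B ^ (χ⁻¹ * ∑ k ∈ Finset.range K, v k) *
        χ ^ (∑ k ∈ Finset.range K, (k:ℝ) * v k) *
        F ^ (∑ k ∈ Finset.range K, v k) * H p₀ t₀) atTop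
      (nhds (B ^ (χ⁻¹ * α) * χ ^ W * F ^ α * H p₀ t₀)) := by
    refine Tendsto.mul_const _ ?_
    exact ((tendsto_const_nhds.rpow (hS.const_mul χ⁻¹) (Or.inl hB0.ne')).mul
      (tendsto_const_nhds.rpow hT (Or.inl hχ0.ne'))).mul
      (tendsto_const_nhds.rpow hS (Or.inl hF0.ne'))
  have hle : Hinf ≤ B ^ (χ⁻¹ * α) * χ ^ W * F ^ α * H p₀ t₀ :=
    le_of_tendsto_of_tendsto' htend hRHS claim
  have h1 : B ^ (χ⁻¹ * α) ≤ (max B 1) ^ α := by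
    rcases le_total B 1 with hb | hb
    · calc B ^ (χ⁻¹ * α) ≤ B ^ (0:ℝ) :=
            Real.rpow_le_rpow_of_exponent_ge hB0 hb (mul_nonneg hrin0.le hα0.le)
        _ = (1:ℝ) ^ α := by rw [Real.rpow_zero, Real.one_rpow]
        _ ≤ (max B 1) ^ α := Real.rpow_le_rpow (by norm_num) (le_max_right B 1) hα0.le
    · calc B ^ (χ⁻¹ * α) ≤ B ^ α := by
            apply Real.rpow_le_rpow_of_exponent_le hb
            nlinarith
        _ ≤ (max B 1) ^ α := Real.rpow_le_rpow hB0.le (le_max_left B 1) hα0.le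
  have h2 : F ^ α ≤ κ ^ α * M ^ α := by
    rw [← Real.mul_rpow hκ0.le hM0.le]
    exact Real.rpow_le_rpow hF0.le hFκM hα0.le
  calc Hinf ≤ B ^ (χ⁻¹ * α) * χ ^ W * F ^ α * H p₀ t₀ := hle
    _ ≤ (max B 1) ^ α * χ ^ W * (κ ^ α * M ^ α) * H p₀ t₀ := by
        refine mul_le_mul_of_nonneg_right ?_ (hHpos p₀ t₀).le
        refine mul_le_mul (mul_le_mul_of_nonneg_right h1 (Real.rpow_nonneg hχ0.le W)) h2
          (Real.rpow_nonneg hF0.le α) ?_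
        exact mul_nonneg (Real.rpow_nonneg (le_trans zero_le_one (le_max_right B 1)) α)
          (Real.rpow_nonneg hχ0.le W)
    _ = (max B 1) ^ α * χ ^ W * κ ^ α * M ^ α * H p₀ t₀ := by ring
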